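/- Let n, d ∈ ℕ with n ≥ 2 satisfy either d = 2, or (n,d) = (2,3). Then for every β ∈ (−∞, 2 − d/2) one has sup_{v ∈ ℤ^d} Σ_{l₁,…,l_n ∈ ℤ^d with l₁+⋯+l_n = v} (λ_v)^β / (λ_{l₁} ⋯ λ_{l_n}) < ∞; in particular each inner sum is finite. -/

import Mathlib

open scoped ENNReal
open Finset

/-- `λ_x = 1 + x₁² + ⋯ + x_d²` for a lattice point `x ∈ ℤ^d`. -/
noncomputable def lam {d : ℕ} (x : Fin d → ℤ) : ℝ := 1 + ∑ i, ((x i : ℝ)) ^ 2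

namespace WickAux


variable {d : ℕ}

lemma one_le_lam (x : Fin d → ℤ) : 1 ≤ lam x := by
  have : (0:ℝ) ≤ ∑ i, ((x i : ℝ))^2 := Finset.sum_nonneg fun i _ => sq_nonneg _
  unfold lam; linarith

lemma lam_pos (x : Fin d → ℤ) : 0 < lam x := lt_of_lt_of_le one_pos (one_le_lam x)

lemma lam_add_le (x y : Fin d → ℤ) : lam (x + y) ≤ 2 * (lam x + lam y) := by
  unfold lam
  have h : ∀ i ∈ Finset.univ (α := Fin d),
      (((x+y) i : ℝ))^2 ≤ 2*((x i:ℝ))^2 + 2*((y i:ℝ))^2 := by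
    intro i _
    have hxy : (((x+y) i : ℤ) : ℝ) = (x i : ℝ) + (y i : ℝ) := by
      simp [Pi.add_apply]
    rw [hxy]; nlinarith [sq_nonneg ((x i:ℝ) - (y i:ℝ))]
  have hsum := Finset.sum_le_sum h
  rw [Finset.sum_add_distrib] at hsum
  rw [← Finset.mul_sum, ← Finset.mul_sum] at hsum
  linarith

lemma key_aux {A B V p q r s β : ℝ} (hA : 1 ≤ A) (hAB : A ≤ B) (hV1 : 1 ≤ V)
    (hV : V ≤ 2*(A+B)) (hrp : r ≤ p) (hrq : r ≤ q) (hβ0 : 0 ≤ β)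
    (hβ : β ≤ 2*r - s) (hrs : r ≤ s) :
    V^β * A^(-p) * B^(-q) ≤ 4^(2*r) * A^(-s) := by
  have hB : 1 ≤ B := hA.trans hAB
  have hApos : (0:ℝ) < A := lt_of_lt_of_le one_pos hA
  have hBpos : (0:ℝ) < B := lt_of_lt_of_le one_pos hB
  have hVpos : (0:ℝ) < V := lt_of_lt_of_le one_pos hV1
  have hr0 : 0 ≤ r := by linarith
  have hs0 : 0 ≤ s := le_trans hr0 hrs
  have hrs2 : 0 ≤ 2*r - s := le_trans hβ0 hβ
  -- V^β ≤ 4^(2r-s) * B^(2r-s)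
  have h1 : V^β ≤ (4*B)^(2*r-s) := by
    calc V^β ≤ V^(2*r-s) := Real.rpow_le_rpow_of_exponent_le hV1 hβ
    _ ≤ (4*B)^(2*r-s) := by
        apply Real.rpow_le_rpow (le_of_lt hVpos) (by linarith) hrs2
  have h1' : (4*B)^(2*r-s) = 4^(2*r-s) * B^(2*r-s) :=
    Real.mul_rpow (by norm_num) (le_of_lt hBpos)
  have h2 : A^(-p) ≤ A^(-r) := Real.rpow_le_rpow_of_exponent_le hA (by linarith)
  have h3 : B^(-q) ≤ B^(-r) := Real.rpow_le_rpow_of_exponent_le hB (by linarith)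
  have hBrs : B^(r-s) ≤ A^(r-s) := by
    have h4 : A^(s-r) ≤ B^(s-r) := Real.rpow_le_rpow (le_of_lt hApos) hAB (by linarith)
    have hA4 : (0:ℝ) < A^(s-r) := Real.rpow_pos_of_pos hApos _
    have : (B^(s-r))⁻¹ ≤ (A^(s-r))⁻¹ := by
      exact inv_anti₀ hA4 h4
    calc B^(r-s) = (B^(s-r))⁻¹ := by
          rw [← Real.rpow_neg (le_of_lt hBpos)]; ring_nf
    _ ≤ (A^(s-r))⁻¹ := this
    _ = A^(r-s) := by rw [← Real.rpow_neg (le_of_lt hApos)]; ring_nf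
  have hpos1 : (0:ℝ) ≤ A^(-p) := (Real.rpow_pos_of_pos hApos _).le
  have hpos2 : (0:ℝ) ≤ B^(-q) := (Real.rpow_pos_of_pos hBpos _).le
  calc V^β * A^(-p) * B^(-q)
      ≤ (4^(2*r-s) * B^(2*r-s)) * A^(-r) * B^(-r) := by
        rw [h1'] at h1
        apply mul_le_mul (mul_le_mul h1 h2 hpos1 (by positivity)) h3 hpos2 (by positivity)
    _ = 4^(2*r-s) * A^(-r) * (B^(2*r-s) * B^(-r)) := by ring
    _ = 4^(2*r-s) * A^(-r) * B^(r-s) := by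
        rw [← Real.rpow_add hBpos]; ring_nf
    _ ≤ 4^(2*r-s) * A^(-r) * A^(r-s) := by
        apply mul_le_mul_of_nonneg_left hBrs (by positivity)
    _ = 4^(2*r-s) * A^(-s) := by
        rw [mul_assoc, ← Real.rpow_add hApos]; ring_nf
    _ ≤ 4^(2*r) * A^(-s) := by
        apply mul_le_mul_of_nonneg_right _ (Real.rpow_pos_of_pos hApos _).le
        exact Real.rpow_le_rpow_of_exponent_le (by norm_num) (by linarith)

lemma key {A B V p q r s β : ℝ} (hA : 1 ≤ A) (hB : 1 ≤ B) (hV1 : 1 ≤ V)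
    (hV : V ≤ 2*(A+B)) (hrp : r ≤ p) (hrq : r ≤ q) (hβ0 : 0 ≤ β)
    (hβ : β ≤ 2*r - s) (hrs : r ≤ s) :
    V^β * A^(-p) * B^(-q) ≤ 4^(2*r) * (A^(-s) + B^(-s)) := by
  have hApos : (0:ℝ) < A := lt_of_lt_of_le one_pos hA
  have hBpos : (0:ℝ) < B := lt_of_lt_of_le one_pos hB
  rcases le_total A B with h | h
  · calc V^β * A^(-p) * B^(-q) ≤ 4^(2*r) * A^(-s) :=
          key_aux hA h hV1 hV hrp hrq hβ0 hβ hrs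
    _ ≤ 4^(2*r) * (A^(-s) + B^(-s)) := by
        apply mul_le_mul_of_nonneg_left _ (by positivity)
        have : (0:ℝ) < B^(-s) := Real.rpow_pos_of_pos hBpos _
        linarith
  · have := key_aux hB h hV1 (by linarith) hrq hrp hβ0 hβ hrs
    calc V^β * A^(-p) * B^(-q) = V^β * B^(-q) * A^(-p) := by ring
    _ ≤ 4^(2*r) * B^(-s) := this
    _ ≤ 4^(2*r) * (A^(-s) + B^(-s)) := by
        apply mul_le_mul_of_nonneg_left _ (by positivity)
        have : (0:ℝ) < A^(-s) := Real.rpow_pos_of_pos hApos _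
        linarith




lemma summable_one_dim {t : ℝ} (ht : 1/2 < t) :
    Summable (fun k : ℤ => (1 + (k:ℝ)^2)^(-t)) := by
  have ht2 : (1:ℝ) < 2*t := by linarith
  have hg : Summable (fun k : ℤ => |(k:ℝ)|^(-(2*t)) + if k = 0 then (1:ℝ) else 0) := by
    apply (Real.summable_abs_int_rpow ht2).add
    apply summable_of_ne_finset_zero (s := {0})
    intro b hb
    simp at hb
    simp [hb]
  apply Summable.of_nonneg_of_le (fun k => Real.rpow_nonneg (by positivity) _) _ hg
  intro k
  rcases eq_or_ne k 0 with hk | hk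
  · subst hk
    have h0 : |((0:ℤ):ℝ)|^(-(2*t)) = 0 := by
      norm_num
      rw [Real.zero_rpow (by linarith)]
    rw [if_pos rfl, h0]
    norm_num
  · have hkpos : (0:ℝ) < (k:ℝ)^2 := by
      have : (k:ℝ) ≠ 0 := Int.cast_ne_zero.mpr hk
      positivity
    have h1 : (1 + (k:ℝ)^2)^(-t) ≤ ((k:ℝ)^2)^(-t) := by
      apply Real.rpow_le_rpow_of_nonpos hkpos (by linarith) (by linarith)
    have h2 : ((k:ℝ)^2)^(-t) = |(k:ℝ)|^(-(2*t)) := by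
      rw [← (sq_abs (k:ℝ)), ← Real.rpow_natCast |(k:ℝ)| 2,
        ← Real.rpow_mul (abs_nonneg _)]
      norm_num
    rw [if_neg hk]
    have : (0:ℝ) ≤ |(k:ℝ)|^(-(2*t)) := Real.rpow_nonneg (abs_nonneg _) _
    linarith [h1, h2.le, h2.ge]

lemma tsum_pi_prod (g : ℤ → ℝ≥0∞) :
    ∀ m : ℕ, ∑' f : Fin m → ℤ, ∏ i, g (f i) = (∑' k : ℤ, g k) ^ m := by
  intro m
  induction m with
  | zero =>
      rw [pow_zero]
      rw [tsum_eq_single (default : Fin 0 → ℤ) (fun b hb => absurd (Subsingleton.elim b default) hb)]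
      simp
  | succ m ih =>
      rw [← (Fin.consEquiv (fun _ : Fin (m+1) => ℤ)).tsum_eq]
      rw [ENNReal.tsum_prod']
      have : ∀ (a : ℤ) (f : Fin m → ℤ),
          (∏ i, g ((Fin.consEquiv (fun _ : Fin (m+1) => ℤ)) (a, f) i))
            = g a * ∏ i, g (f i) := by
        intro a f
        rw [Fin.prod_univ_succ]
        simp [Fin.consEquiv]
      simp_rw [this]
      rw [pow_succ]
      calc (∑' (a : ℤ), ∑' (f : Fin m → ℤ), g a * ∏ i, g (f i))
          = ∑' (a : ℤ), g a * ∑' (f : Fin m → ℤ), ∏ i, g (f i) := by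
            congr 1; funext a; rw [ENNReal.tsum_mul_left]
        _ = (∑' k, g k) * (∑' k, g k)^m := by
            rw [ih, ENNReal.tsum_mul_right]
        _ = (∑' k, g k)^m * (∑' k, g k) := by ring





lemma prod_le_lam_pow {d : ℕ} (x : Fin d → ℤ) :
    ∏ i, (1 + ((x i : ℝ))^2) ≤ (lam x)^d := by
  have h : ∀ i ∈ Finset.univ (α := Fin d), 1 + ((x i:ℝ))^2 ≤ lam x := by
    intro i _
    unfold lam
    have := Finset.single_le_sum (f := fun j => ((x j : ℝ))^2)
      (fun j _ => sq_nonneg _) (Finset.mem_univ i)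
    linarith
  calc ∏ i, (1 + ((x i : ℝ))^2) ≤ ∏ _i : Fin d, lam x :=
        Finset.prod_le_prod (fun i _ => by positivity) h
    _ = (lam x)^d := by rw [Finset.prod_const, Finset.card_univ, Fintype.card_fin]

lemma S_lt_top {d : ℕ} (hd : 0 < d) {s : ℝ} (hs : (d:ℝ)/2 < s) :
    ∑' x : Fin d → ℤ, ENNReal.ofReal ((lam x) ^ (-s)) < ⊤ := by
  set t : ℝ := s / d with ht_def
  have hd' : (0:ℝ) < d := by exact_mod_cast hd
  have ht : 1/2 < t := by
    rw [ht_def, lt_div_iff₀ hd']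
    nlinarith
  have hts : (0:ℝ) < s := by nlinarith
  have hpt : ∀ x : Fin d → ℤ,
      (lam x) ^ (-s) ≤ ∏ i, (1 + ((x i : ℝ))^2)^(-t) := by
    intro x
    have hl1 : (1:ℝ) ≤ lam x := by
      unfold lam
      have : (0:ℝ) ≤ ∑ i, ((x i : ℝ))^2 := Finset.sum_nonneg fun i _ => sq_nonneg _
      linarith
    have hPpos : (0:ℝ) < ∏ i, (1 + ((x i : ℝ))^2) :=
      Finset.prod_pos (fun i _ => by positivity)
    have h1 : (lam x) ^ (-s) = ((lam x)^(d:ℕ)) ^ (-t) := by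
      rw [← Real.rpow_natCast (lam x) d, ← Real.rpow_mul (by linarith)]
      congr 1
      rw [ht_def]; field_simp [hd'.ne']
    rw [h1]
    have h2 : ((lam x)^(d:ℕ)) ^ (-t) ≤ (∏ i, (1 + ((x i : ℝ))^2)) ^ (-t) := by
      apply Real.rpow_le_rpow_of_nonpos hPpos (prod_le_lam_pow x) (by linarith)
    refine h2.trans_eq ?_
    rw [← Real.rpow_natCast _ d] at *
    rw [← Real.finset_prod_rpow _ _ (fun i _ => by positivity)]
  calc ∑' x : Fin d → ℤ, ENNReal.ofReal ((lam x) ^ (-s))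
      ≤ ∑' x : Fin d → ℤ, ∏ i, ENNReal.ofReal ((1 + ((x i : ℝ))^2)^(-t)) := by
        apply ENNReal.tsum_le_tsum
        intro x
        calc ENNReal.ofReal ((lam x) ^ (-s))
            ≤ ENNReal.ofReal (∏ i, (1 + ((x i : ℝ))^2)^(-t)) :=
              ENNReal.ofReal_le_ofReal (hpt x)
          _ = ∏ i, ENNReal.ofReal ((1 + ((x i : ℝ))^2)^(-t)) :=
              ENNReal.ofReal_prod_of_nonneg (fun i _ => Real.rpow_nonneg (by positivity) _)
    _ = (∑' k : ℤ, ENNReal.ofReal ((1 + (k:ℝ)^2)^(-t))) ^ d :=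
        tsum_pi_prod (fun k => ENNReal.ofReal ((1 + (k:ℝ)^2)^(-t))) d
    _ < ⊤ := by
        apply ENNReal.pow_lt_top
        rw [← ENNReal.ofReal_tsum_of_nonneg (fun k => Real.rpow_nonneg (by positivity) _)
          (summable_one_dim ht)]
        exact ENNReal.ofReal_lt_top


variable {d : ℕ}
noncomputable def S (d : ℕ) (s : ℝ) : ℝ≥0∞ :=
  ∑' x : Fin d → ℤ, ENNReal.ofReal ((lam x) ^ (-s))

lemma conv_le {p q r s β : ℝ} (hrp : r ≤ p) (hrq : r ≤ q) (hβ0 : 0 ≤ β)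
    (hβ : β ≤ 2*r - s) (hrs : r ≤ s) (v : Fin d → ℤ) :
    ∑' a : Fin d → ℤ, ENNReal.ofReal ((lam v)^β * (lam a)^(-p) * (lam (v - a))^(-q))
      ≤ ENNReal.ofReal (4^(2*r)) * (2 * S d s) := by
  have hpt : ∀ a : Fin d → ℤ,
      ENNReal.ofReal ((lam v)^β * (lam a)^(-p) * (lam (v - a))^(-q))
        ≤ ENNReal.ofReal (4^(2*r)) *
          (ENNReal.ofReal ((lam a)^(-s)) + ENNReal.ofReal ((lam (v-a))^(-s))) := by
    intro a
    have hV : lam v ≤ 2 * (lam a + lam (v - a)) := by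
      have := lam_add_le a (v - a)
      rwa [add_sub_cancel] at this
    have hk := key (one_le_lam a) (one_le_lam (v-a)) (one_le_lam v) hV hrp hrq hβ0 hβ hrs
    calc ENNReal.ofReal ((lam v)^β * (lam a)^(-p) * (lam (v - a))^(-q))
        ≤ ENNReal.ofReal (4^(2*r) * ((lam a)^(-s) + (lam (v-a))^(-s))) :=
          ENNReal.ofReal_le_ofReal hk
      _ = ENNReal.ofReal (4^(2*r)) *
          (ENNReal.ofReal ((lam a)^(-s)) + ENNReal.ofReal ((lam (v-a))^(-s))) := by
          rw [ENNReal.ofReal_mul (by positivity),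
            ENNReal.ofReal_add (Real.rpow_nonneg (lam_pos a).le _)
              (Real.rpow_nonneg (lam_pos (v-a)).le _)]
  calc ∑' a : Fin d → ℤ, ENNReal.ofReal ((lam v)^β * (lam a)^(-p) * (lam (v - a))^(-q))
      ≤ ∑' a : Fin d → ℤ, ENNReal.ofReal (4^(2*r)) *
          (ENNReal.ofReal ((lam a)^(-s)) + ENNReal.ofReal ((lam (v-a))^(-s))) :=
        ENNReal.tsum_le_tsum hpt
    _ = ENNReal.ofReal (4^(2*r)) *
        ((∑' a : Fin d → ℤ, ENNReal.ofReal ((lam a)^(-s)))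
          + ∑' a : Fin d → ℤ, ENNReal.ofReal ((lam (v-a))^(-s))) := by
        rw [ENNReal.tsum_mul_left, ENNReal.tsum_add]
    _ = ENNReal.ofReal (4^(2*r)) * (S d s + S d s) := by
        congr 2
        exact (Equiv.subLeft v).tsum_eq (fun x => ENNReal.ofReal ((lam x)^(-s)))
    _ = ENNReal.ofReal (4^(2*r)) * (2 * S d s) := by rw [two_mul (S d s)]

variable {d : ℕ}


noncomputable def T (d k : ℕ) (v : Fin d → ℤ) : ℝ≥0∞ :=
  ∑' m : Fin k → (Fin d → ℤ),
    ENNReal.ofReal ((∏ j, lam (m j))⁻¹ * (lam (v - ∑ j, m j))⁻¹)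

lemma T_zero (v : Fin d → ℤ) : T d 0 v = ENNReal.ofReal ((lam v)⁻¹) := by
  unfold T
  rw [tsum_eq_single (default : Fin 0 → Fin d → ℤ)
    (fun b hb => absurd (Subsingleton.elim b default) hb)]
  simp

lemma T_succ (k : ℕ) (v : Fin d → ℤ) :
    T d (k+1) v = ∑' a : Fin d → ℤ, ENNReal.ofReal ((lam a)⁻¹) * T d k (v - a) := by
  unfold T
  rw [← (Fin.consEquiv (fun _ : Fin (k+1) => (Fin d → ℤ))).tsum_eq, ENNReal.tsum_prod']
  congr 1
  funext a
  have hterm : ∀ f : Fin k → (Fin d → ℤ),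
      ENNReal.ofReal ((∏ j, lam ((Fin.consEquiv (fun _ : Fin (k+1) => (Fin d → ℤ))) (a, f) j))⁻¹
        * (lam (v - ∑ j, (Fin.consEquiv (fun _ : Fin (k+1) => (Fin d → ℤ))) (a, f) j))⁻¹)
      = ENNReal.ofReal ((lam a)⁻¹) *
        ENNReal.ofReal ((∏ j, lam (f j))⁻¹ * (lam ((v - a) - ∑ j, f j))⁻¹) := by
    intro f
    have hp : (∏ j : Fin (k+1), lam (Fin.cons (α := fun _ : Fin (k+1) => (Fin d → ℤ)) a f j)) = lam a * ∏ j, lam (f j) := by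
      rw [Fin.prod_univ_succ]
      simp
    have hs : (∑ j : Fin (k+1), Fin.cons (α := fun _ : Fin (k+1) => (Fin d → ℤ)) a f j) = a + ∑ j, f j := by
      rw [Fin.sum_univ_succ]
      simp
    simp only [Fin.consEquiv_apply]
    rw [hp, hs, sub_add_eq_sub_sub, mul_inv, mul_assoc,
      ENNReal.ofReal_mul (inv_nonneg.mpr (lam_pos a).le)]
  simp_rw [hterm]
  rw [ENNReal.tsum_mul_left]

lemma Q_two : ∀ k : ℕ, ∀ γ : ℝ, 0 ≤ γ → γ < 1 → ∃ C : ℝ≥0∞, C < ⊤ ∧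
    ∀ v : Fin 2 → ℤ, T 2 k v ≤ C * ENNReal.ofReal ((lam v) ^ (-γ)) := by
  intro k
  induction k with
  | zero =>
      intro γ hγ0 hγ1
      refine ⟨1, ENNReal.one_lt_top, fun v => ?_⟩
      rw [T_zero, one_mul]
      apply ENNReal.ofReal_le_ofReal
      rw [← Real.rpow_neg_one (lam v)]
      exact Real.rpow_le_rpow_of_exponent_le (one_le_lam v) (by linarith)
  | succ k ih =>
      intro γ hγ0 hγ1
      set γ₀ : ℝ := (3+γ)/4 with hγ₀def
      set s : ℝ := (5-γ)/4 with hsdef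
      obtain ⟨C, hC, hbound⟩ := ih γ₀ (by rw [hγ₀def]; linarith) (by rw [hγ₀def]; linarith)
      refine ⟨C * (ENNReal.ofReal (4^(2*γ₀)) * (2 * S 2 s)), ?_, ?_⟩
      · apply ENNReal.mul_lt_top hC
        apply ENNReal.mul_lt_top ENNReal.ofReal_lt_top
        apply ENNReal.mul_lt_top (by norm_num)
        apply S_lt_top (by norm_num)
        rw [hsdef]; norm_num; linarith
      intro v
      have hid : ∀ a : Fin 2 → ℤ, ((lam a)⁻¹ * (lam (v-a))^(-γ₀) : ℝ)
          = (lam v)^(-γ) * ((lam v)^γ * (lam a)^(-(1:ℝ)) * (lam (v-a))^(-γ₀)) := by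
        intro a
        have h1 : (lam v)^(-γ) * (lam v)^γ = 1 := by
          rw [← Real.rpow_add (lam_pos v)]; simp
        calc ((lam a)⁻¹ * (lam (v-a))^(-γ₀) : ℝ)
            = ((lam v)^(-γ) * (lam v)^γ) * ((lam a)^(-(1:ℝ)) * (lam (v-a))^(-γ₀)) := by
              rw [h1, Real.rpow_neg_one, one_mul]
          _ = (lam v)^(-γ) * ((lam v)^γ * (lam a)^(-(1:ℝ)) * (lam (v-a))^(-γ₀)) := by ring
      calc T 2 (k+1) v = ∑' a : Fin 2 → ℤ, ENNReal.ofReal ((lam a)⁻¹) * T 2 k (v - a) :=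
            T_succ k v
        _ ≤ ∑' a : Fin 2 → ℤ, ENNReal.ofReal ((lam a)⁻¹) *
              (C * ENNReal.ofReal ((lam (v-a))^(-γ₀))) :=
            ENNReal.tsum_le_tsum (fun a => mul_le_mul_right (hbound (v-a)) _)
        _ = C * ∑' a : Fin 2 → ℤ,
              ENNReal.ofReal ((lam a)⁻¹ * (lam (v-a))^(-γ₀)) := by
            rw [← ENNReal.tsum_mul_left]
            congr 1; funext a
            rw [ENNReal.ofReal_mul (inv_nonneg.mpr (lam_pos a).le)]
            ring
        _ = C * (ENNReal.ofReal ((lam v)^(-γ)) * ∑' a : Fin 2 → ℤ,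
              ENNReal.ofReal ((lam v)^γ * (lam a)^(-(1:ℝ)) * (lam (v-a))^(-γ₀))) := by
            congr 1
            rw [← ENNReal.tsum_mul_left]
            congr 1; funext a
            rw [hid a, ENNReal.ofReal_mul (Real.rpow_nonneg (lam_pos v).le _)]
        _ ≤ C * (ENNReal.ofReal ((lam v)^(-γ)) *
              (ENNReal.ofReal (4^(2*γ₀)) * (2 * S 2 s))) := by
            apply mul_le_mul_right
            apply mul_le_mul_right
            apply conv_le (p := 1) (q := γ₀) (r := γ₀) (s := s) (β := γ)
              (by rw [hγ₀def]; linarith) le_rfl hγ0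
              (by rw [hγ₀def, hsdef]; linarith) (by rw [hγ₀def, hsdef]; linarith)
        _ = C * (ENNReal.ofReal (4^(2*γ₀)) * (2 * S 2 s)) *
              ENNReal.ofReal ((lam v)^(-γ)) := by ring

lemma Q_three {γ : ℝ} (hγ0 : 0 ≤ γ) (hγ1 : γ < 1/2) :
    ∃ C : ℝ≥0∞, C < ⊤ ∧
      ∀ v : Fin 3 → ℤ, T 3 1 v ≤ C * ENNReal.ofReal ((lam v) ^ (-γ)) := by
  set s : ℝ := 7/4 - γ/2 with hsdef
  refine ⟨ENNReal.ofReal (4^(2*(1:ℝ))) * (2 * S 3 s), ?_, ?_⟩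
  · apply ENNReal.mul_lt_top ENNReal.ofReal_lt_top
    apply ENNReal.mul_lt_top (by norm_num)
    apply S_lt_top (by norm_num)
    rw [hsdef]; norm_num; linarith
  intro v
  have hid : ∀ a : Fin 3 → ℤ, ((lam a)⁻¹ * (lam (v-a))⁻¹ : ℝ)
      = (lam v)^(-γ) * ((lam v)^γ * (lam a)^(-(1:ℝ)) * (lam (v-a))^(-(1:ℝ))) := by
    intro a
    have h1 : (lam v)^(-γ) * (lam v)^γ = 1 := by
      rw [← Real.rpow_add (lam_pos v)]; simp
    calc ((lam a)⁻¹ * (lam (v-a))⁻¹ : ℝ)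
        = ((lam v)^(-γ) * (lam v)^γ) * ((lam a)^(-(1:ℝ)) * (lam (v-a))^(-(1:ℝ))) := by
          rw [h1, Real.rpow_neg_one, Real.rpow_neg_one, one_mul]
      _ = (lam v)^(-γ) * ((lam v)^γ * (lam a)^(-(1:ℝ)) * (lam (v-a))^(-(1:ℝ))) := by ring
  calc T 3 1 v = ∑' a : Fin 3 → ℤ, ENNReal.ofReal ((lam a)⁻¹) * T 3 0 (v - a) :=
        T_succ 0 v
    _ = ENNReal.ofReal ((lam v)^(-γ)) * ∑' a : Fin 3 → ℤ,
          ENNReal.ofReal ((lam v)^γ * (lam a)^(-(1:ℝ)) * (lam (v-a))^(-(1:ℝ))) := by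
        rw [← ENNReal.tsum_mul_left]
        congr 1; funext a
        rw [T_zero, ← ENNReal.ofReal_mul (inv_nonneg.mpr (lam_pos a).le), hid a,
          ENNReal.ofReal_mul (Real.rpow_nonneg (lam_pos v).le _)]
    _ ≤ ENNReal.ofReal ((lam v)^(-γ)) *
          (ENNReal.ofReal (4^(2*(1:ℝ))) * (2 * S 3 s)) := by
        apply mul_le_mul_right
        apply conv_le (p := 1) (q := 1) (r := 1) (s := s) (β := γ)
          le_rfl le_rfl hγ0 (by rw [hsdef]; linarith) (by rw [hsdef]; linarith)
    _ = ENNReal.ofReal (4^(2*(1:ℝ))) * (2 * S 3 s) * ENNReal.ofReal ((lam v)^(-γ)) := by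
        ring

variable {d : ℕ}
def E (d k : ℕ) (v : Fin d → ℤ) :
    (Fin k → (Fin d → ℤ)) ≃ {l : Fin (k+1) → (Fin d → ℤ) // ∑ j, l j = v} where
  toFun m := ⟨Fin.snoc m (v - ∑ j, m j), by
    rw [Fin.sum_univ_castSucc]
    simp⟩
  invFun l := Fin.init l.1
  left_inv m := by
    simp [Fin.init_snoc]
  right_inv l := by
    apply Subtype.ext
    have hlast : l.1 (Fin.last k) = v - ∑ i : Fin k, Fin.init l.1 i := by
      have := l.2
      rw [Fin.sum_univ_castSucc] at this
      simp only [Fin.init]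
      rw [eq_sub_iff_add_eq]
      rw [add_comm]
      exact this
    simp only
    rw [← hlast]
    exact Fin.snoc_init_self l.1

lemma subtype_eq {k : ℕ} (β : ℝ) (v : Fin d → ℤ) :
    ∑' l : {l : Fin (k+1) → (Fin d → ℤ) // ∑ j, l j = v},
        ENNReal.ofReal ((lam v)^β / ∏ j, lam (l.1 j))
      = ENNReal.ofReal ((lam v)^β) * T d k v := by
  rw [← (E d k v).tsum_eq]
  unfold T
  rw [← ENNReal.tsum_mul_left]
  congr 1; funext m
  have hprod : (∏ j : Fin (k+1), lam ((E d k v m).1 j))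
      = (∏ i, lam (m i)) * lam (v - ∑ j, m j) := by
    show (∏ j : Fin (k+1), lam (Fin.snoc (α := fun _ => (Fin d → ℤ)) m (v - ∑ j, m j) j)) = _
    rw [Fin.prod_univ_castSucc]
    simp
  rw [hprod]
  have h1 : (lam v)^β / ((∏ i, lam (m i)) * lam (v - ∑ j, m j))
      = (lam v)^β * ((∏ i, lam (m i))⁻¹ * (lam (v - ∑ j, m j))⁻¹) := by
    field_simp
  rw [h1, ENNReal.ofReal_mul (Real.rpow_nonneg (lam_pos v).le _)]


end WickAux

open WickAux in
/-- Summability for Wick powers: if `n ≥ 2` and either `d = 2` or `(n,d) = (2,3)`,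
then for every `β < 2 − d/2` each sum
`Σ_{l₁+⋯+l_n = v} (λ_v)^β/(λ_{l₁}⋯λ_{l_n})` is finite and
the supremum over `v ∈ ℤ^d` of these sums is finite. -/
theorem wick_power_summability (n d : ℕ) (hn : 2 ≤ n)
    (hcase : d = 2 ∨ (n = 2 ∧ d = 3)) (β : ℝ) (hβ : β < 2 - (d : ℝ) / 2) :
    (∀ v : Fin d → ℤ,
      Summable (fun l : {l : Fin n → (Fin d → ℤ) // ∑ j, l j = v} =>
        (lam v) ^ β / ∏ j, lam (l.1 j)))
    ∧ (⨆ v : Fin d → ℤ,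
        ∑' l : {l : Fin n → (Fin d → ℤ) // ∑ j, l j = v},
          ENNReal.ofReal ((lam v) ^ β / ∏ j, lam (l.1 j))) < ⊤ := by
  obtain ⟨k, rfl⟩ : ∃ k, n = k + 1 := ⟨n - 1, by omega⟩
  have hmain : ∃ C : ℝ≥0∞, C < ⊤ ∧ ∀ v : Fin d → ℤ,
      ENNReal.ofReal ((lam v)^β) * T d k v ≤ C := by
    have huniform : ∃ C : ℝ≥0∞, C < ⊤ ∧ ∃ γ : ℝ, β < γ ∧ ∀ v : Fin d → ℤ,
        T d k v ≤ C * ENNReal.ofReal ((lam v) ^ (-γ)) := by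
      rcases hcase with rfl | ⟨hn2, rfl⟩
      · have hβ1 : β < 1 := by norm_num at hβ; linarith
        set γ : ℝ := (max β 0 + 1)/2 with hγdef
        have hγ0 : 0 ≤ γ := by
          have := le_max_right β 0
          rw [hγdef]; linarith
        have hγ1 : γ < 1 := by
          have := max_lt hβ1 one_pos
          rw [hγdef]; linarith
        obtain ⟨C, hC, hb⟩ := Q_two k γ hγ0 hγ1
        exact ⟨C, hC, γ, by have := le_max_left β 0; rw [hγdef]; linarith, hb⟩
      · have hk1 : k = 1 := by omega
        subst hk1
        have hβ1 : β < 1/2 := by norm_num at hβ; linarith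
        set γ : ℝ := (max β 0 + 1/2)/2 with hγdef
        have hγ0 : 0 ≤ γ := by
          have := le_max_right β 0
          rw [hγdef]; linarith
        have hγ1 : γ < 1/2 := by
          have := max_lt hβ1 (by norm_num : (0:ℝ) < 1/2)
          rw [hγdef]; linarith
        obtain ⟨C, hC, hb⟩ := Q_three hγ0 hγ1
        exact ⟨C, hC, γ, by have := le_max_left β 0; rw [hγdef]; linarith, hb⟩
    obtain ⟨C, hC, γ, hβγ, hb⟩ := huniform
    refine ⟨C, hC, fun v => ?_⟩
    calc ENNReal.ofReal ((lam v)^β) * T d k v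
        ≤ ENNReal.ofReal ((lam v)^β) * (C * ENNReal.ofReal ((lam v) ^ (-γ))) :=
          mul_le_mul_right (hb v) _
      _ = C * ENNReal.ofReal ((lam v)^β * (lam v)^(-γ)) := by
          rw [ENNReal.ofReal_mul (Real.rpow_nonneg (lam_pos v).le _)]; ring
      _ = C * ENNReal.ofReal ((lam v)^(β - γ)) := by
          rw [← Real.rpow_add (lam_pos v)]
          ring_nf
      _ ≤ C * 1 := by
          apply mul_le_mul_right
          rw [← ENNReal.ofReal_one]
          apply ENNReal.ofReal_le_ofReal
          exact Real.rpow_le_one_of_one_le_of_nonpos (one_le_lam v) (by linarith)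
      _ = C := mul_one C
  obtain ⟨C, hC, hb⟩ := hmain
  constructor
  · intro v
    have hfin : (∑' l : {l : Fin (k+1) → (Fin d → ℤ) // ∑ j, l j = v},
        ENNReal.ofReal ((lam v) ^ β / ∏ j, lam (l.1 j))) ≠ ⊤ := by
      rw [subtype_eq]
      exact ((hb v).trans_lt hC).ne
    have := ENNReal.summable_toReal hfin
    apply this.congr
    intro l
    rw [ENNReal.toReal_ofReal]
    apply div_nonneg (Real.rpow_nonneg (lam_pos v).le _)
    exact le_of_lt (Finset.prod_pos (fun j _ => lam_pos _))
  · apply lt_of_le_of_lt _ hC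
    apply iSup_le
    intro v
    rw [subtype_eq]
    exact hb v
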